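/- Dyckhoff's calculus is terminating: there is a well-founded order on sequents such that for every rule instance, each premise is strictly smaller than the conclusion, where the order is given lexicographically by (weight of the multiset of formulas), with weight of atoms and ⊥ equal 1, w(φ ∧ ψ) = w(φ) + w(ψ) + 2, w(φ ∨ ψ) = w(φ) + w(ψ) + 1, w(φ → ψ) = w(φ) + w(ψ) + 1 — in particular, every backward proof search in Dyckhoff's calculus terminates. -/

import Mathlib

inductive IF : Type where
  | var : Nat → IF
  | bot : IF
  | conj : IF → IF → IF
  | disj : IF → IF → IF
  | imp : IF → IF → IF
  deriving DecidableEq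

/-- Dyckhoff's weight function: atoms and `⊥` weigh `1`,
`w(φ ∧ ψ) = w φ + w ψ + 2`, `w(φ ∨ ψ) = w(φ → ψ) = w φ + w ψ + 1`. -/
def w : IF → Nat
  | .var _ => 1
  | .bot => 1
  | .conj a b => w a + w b + 2
  | .disj a b => w a + w b + 1
  | .imp a b => w a + w b + 1

abbrev DSeq := Multiset IF × Option IF

/-- The measure of a sequent: the multiset of the weights of all its formulas. -/
def mea (S : DSeq) : Multiset Nat :=
  S.1.map w + (S.2.elim 0 fun φ => {w φ})

/-- The Dershowitz-Manna multiset order on `Multiset Nat`. -/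
def MLT (M N : Multiset Nat) : Prop :=
  ∃ X Y Z : Multiset Nat, Z ≠ 0 ∧ M = X + Y ∧ N = X + Z ∧ ∀ y ∈ Y, ∃ z ∈ Z, y < z

/-- The premise-conclusion (one-step backward proof search) relation of
Dyckhoff's calculus: `DStep T S` holds when `T` is a premise of a rule
instance with conclusion `S`. -/
inductive DStep : DSeq → DSeq → Prop where
  | andL (Γ Δ φ ψ) : DStep (φ ::ₘ ψ ::ₘ Γ, Δ) (IF.conj φ ψ ::ₘ Γ, Δ)
  | andR₁ (Γ φ ψ) : DStep (Γ, some φ) (Γ, some (IF.conj φ ψ))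
  | andR₂ (Γ φ ψ) : DStep (Γ, some ψ) (Γ, some (IF.conj φ ψ))
  | orL₁ (Γ Δ φ ψ) : DStep (φ ::ₘ Γ, Δ) (IF.disj φ ψ ::ₘ Γ, Δ)
  | orL₂ (Γ Δ φ ψ) : DStep (ψ ::ₘ Γ, Δ) (IF.disj φ ψ ::ₘ Γ, Δ)
  | orR₁ (Γ φ ψ) : DStep (Γ, some φ) (Γ, some (IF.disj φ ψ))
  | orR₂ (Γ φ ψ) : DStep (Γ, some ψ) (Γ, some (IF.disj φ ψ))
  | impR (Γ φ ψ) : DStep (φ ::ₘ Γ, some ψ) (Γ, some (IF.imp φ ψ))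
  | impL1 (Γ Δ n ψ) : DStep (IF.var n ::ₘ ψ ::ₘ Γ, Δ)
      (IF.var n ::ₘ IF.imp (IF.var n) ψ ::ₘ Γ, Δ)
  | impL2 (Γ Δ φ ψ γ) : DStep (IF.imp φ (IF.imp ψ γ) ::ₘ Γ, Δ)
      (IF.imp (IF.conj φ ψ) γ ::ₘ Γ, Δ)
  | impL3 (Γ Δ φ ψ γ) : DStep (IF.imp φ γ ::ₘ IF.imp ψ γ ::ₘ Γ, Δ)
      (IF.imp (IF.disj φ ψ) γ ::ₘ Γ, Δ)
  | impL4a (Γ Δ φ ψ γ) : DStep (IF.imp ψ γ ::ₘ Γ, some (IF.imp φ ψ))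
      (IF.imp (IF.imp φ ψ) γ ::ₘ Γ, Δ)
  | impL4b (Γ Δ φ ψ γ) : DStep (γ ::ₘ Γ, Δ) (IF.imp (IF.imp φ ψ) γ ::ₘ Γ, Δ)


lemma w_pos (φ : IF) : 0 < w φ := by
  cases φ <;> simp [w]

lemma mea_cons (φ : IF) (Γ : Multiset IF) (Δ : Option IF) :
    mea (φ ::ₘ Γ, Δ) = w φ ::ₘ mea (Γ, Δ) := by
  simp [mea, Multiset.cons_add]

lemma mea_some (Γ : Multiset IF) (φ : IF) :
    mea (Γ, some φ) = w φ ::ₘ Γ.map w := by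
  simp only [mea, Option.elim]
  rw [add_comm, Multiset.singleton_add]

/-- Generic single-principal-formula instance of the DM order. -/
lemma MLT_of (X Y : Multiset Nat) (z : Nat) (h : ∀ y ∈ Y, y < z)
    (M N : Multiset Nat) (hM : M = X + Y) (hN : N = z ::ₘ X) : MLT M N := by
  refine ⟨X, Y, {z}, by simp, hM, ?_, fun y hy => ⟨z, by simp, h y hy⟩⟩
  rw [hN, add_comm, Multiset.singleton_add]

lemma exists_max {Z : Multiset Nat} (h : Z ≠ 0) : ∃ i ∈ Z, ∀ z ∈ Z, z ≤ i := by
  induction Z using Multiset.induction with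
  | empty => exact absurd rfl h
  | cons a s ih =>
    rcases eq_or_ne s 0 with rfl | hs
    · exact ⟨a, Multiset.mem_cons_self a 0, by simp⟩
    · obtain ⟨i, hi, hle⟩ := ih hs
      refine ⟨max a i, ?_, ?_⟩
      · rcases le_total a i with h' | h'
        · simp [max_eq_right h', Multiset.mem_cons, hi]
        · simp [max_eq_left h']
      · intro z hz
        rcases Multiset.mem_cons.1 hz with rfl | hz
        · exact le_max_left _ _
        · exact le_trans (hle z hz) (le_max_right _ _)

lemma MLT_wf : WellFounded MLT := by
  have hwf : WellFounded (Finsupp.Lex (α := ℕ) (N := ℕ) (· > ·) (· < ·)) :=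
    Finsupp.Lex.wellFounded' (fun n h => Nat.not_lt_zero n h) Nat.lt_wfRel.wf Nat.lt_wfRel.wf
  refine Subrelation.wf (r := InvImage (Finsupp.Lex (· > ·) (· < ·)) Multiset.toFinsupp)
    ?_ (InvImage.wf _ hwf)
  rintro M N ⟨X, Y, Z, hZ, rfl, rfl, hd⟩
  obtain ⟨i, hiZ, hmax⟩ := exists_max hZ
  refine ⟨i, ?_, ?_⟩
  · intro d hdi
    have hY : Y.count d = 0 := by
      rw [Multiset.count_eq_zero]
      intro hmem
      obtain ⟨z, hz, hyz⟩ := hd d hmem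
      exact absurd (lt_of_lt_of_le hyz (hmax z hz)) (by omega)
    have hZ' : Z.count d = 0 := by
      rw [Multiset.count_eq_zero]
      intro hmem
      exact absurd (hmax d hmem) (by omega)
    show (X + Y).count d = (X + Z).count d
    simp [Multiset.count_add, hY, hZ']
  · have hY : Y.count i = 0 := by
      rw [Multiset.count_eq_zero]
      intro hmem
      obtain ⟨z, hz, hyz⟩ := hd i hmem
      exact absurd (lt_of_lt_of_le hyz (hmax z hz)) (lt_irrefl i)
    have hZ' : 0 < Z.count i := Multiset.count_pos.2 hiZ
    show (X + Y).count i < (X + Z).count i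
    simp only [Multiset.count_add, hY]
    omega

lemma MLT_step {S T : DSeq} (h : DStep S T) : MLT (mea S) (mea T) := by
  cases h with
  | andL Γ Δ φ ψ =>
    rw [mea_cons, mea_cons, mea_cons]
    refine MLT_of (mea (Γ, Δ)) {w φ, w ψ} (w (IF.conj φ ψ)) ?_ _ _ ?_ rfl
    · intro y hy
      rcases Multiset.mem_cons.1 hy with rfl | hy
      · simp [w]; omega
      · rw [Multiset.mem_singleton.1 hy]; simp [w]; omega
    · rw [add_comm]
      simp [Multiset.insert_eq_cons, Multiset.cons_add]
  | andR₁ Γ φ ψ =>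
    rw [mea_some, mea_some]
    refine MLT_of (Γ.map w) {w φ} (w (IF.conj φ ψ)) ?_ _ _ ?_ rfl
    · intro y hy
      rw [Multiset.mem_singleton.1 hy]; simp [w]
      have := w_pos ψ; omega
    · rw [add_comm, Multiset.singleton_add]
  | andR₂ Γ φ ψ =>
    rw [mea_some, mea_some]
    refine MLT_of (Γ.map w) {w ψ} (w (IF.conj φ ψ)) ?_ _ _ ?_ rfl
    · intro y hy
      rw [Multiset.mem_singleton.1 hy]; simp [w]
      have := w_pos φ; omega
    · rw [add_comm, Multiset.singleton_add]
  | orL₁ Γ Δ φ ψ =>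
    rw [mea_cons, mea_cons]
    refine MLT_of (mea (Γ, Δ)) {w φ} (w (IF.disj φ ψ)) ?_ _ _ ?_ rfl
    · intro y hy
      rw [Multiset.mem_singleton.1 hy]; simp [w]
    · rw [add_comm, Multiset.singleton_add]
  | orL₂ Γ Δ φ ψ =>
    rw [mea_cons, mea_cons]
    refine MLT_of (mea (Γ, Δ)) {w ψ} (w (IF.disj φ ψ)) ?_ _ _ ?_ rfl
    · intro y hy
      rw [Multiset.mem_singleton.1 hy]; simp [w]
    · rw [add_comm, Multiset.singleton_add]
  | orR₁ Γ φ ψ =>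
    rw [mea_some, mea_some]
    refine MLT_of (Γ.map w) {w φ} (w (IF.disj φ ψ)) ?_ _ _ ?_ rfl
    · intro y hy
      rw [Multiset.mem_singleton.1 hy]; simp [w]
    · rw [add_comm, Multiset.singleton_add]
  | orR₂ Γ φ ψ =>
    rw [mea_some, mea_some]
    refine MLT_of (Γ.map w) {w ψ} (w (IF.disj φ ψ)) ?_ _ _ ?_ rfl
    · intro y hy
      rw [Multiset.mem_singleton.1 hy]; simp [w]
    · rw [add_comm, Multiset.singleton_add]
  | impR Γ φ ψ =>
    rw [mea_cons, mea_some, mea_some]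
    refine MLT_of (Γ.map w) {w φ, w ψ} (w (IF.imp φ ψ)) ?_ _ _ ?_ rfl
    · intro y hy
      rcases Multiset.mem_cons.1 hy with rfl | hy
      · simp [w]
      · rw [Multiset.mem_singleton.1 hy]; simp [w]
    · rw [add_comm]
      simp [Multiset.insert_eq_cons, Multiset.cons_add]
  | impL1 Γ Δ n ψ =>
    rw [mea_cons, mea_cons, mea_cons, mea_cons]
    refine MLT_of (w (IF.var n) ::ₘ mea (Γ, Δ)) {w ψ} (w (IF.imp (IF.var n) ψ)) ?_ _ _ ?_ ?_
    · intro y hy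
      rw [Multiset.mem_singleton.1 hy]; simp [w]
    · rw [add_comm, Multiset.singleton_add, Multiset.cons_swap]
    · rw [Multiset.cons_swap]
  | impL2 Γ Δ φ ψ γ =>
    rw [mea_cons, mea_cons]
    refine MLT_of (mea (Γ, Δ)) {w (IF.imp φ (IF.imp ψ γ))}
      (w (IF.imp (IF.conj φ ψ) γ)) ?_ _ _ ?_ rfl
    · intro y hy
      rw [Multiset.mem_singleton.1 hy]; simp [w]; omega
    · rw [add_comm, Multiset.singleton_add]
  | impL3 Γ Δ φ ψ γ =>
    rw [mea_cons, mea_cons, mea_cons]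
    refine MLT_of (mea (Γ, Δ)) {w (IF.imp φ γ), w (IF.imp ψ γ)}
      (w (IF.imp (IF.disj φ ψ) γ)) ?_ _ _ ?_ rfl
    · intro y hy
      rcases Multiset.mem_cons.1 hy with rfl | hy
      · simp [w]
      · rw [Multiset.mem_singleton.1 hy]; simp [w]
    · rw [add_comm]
      simp [Multiset.insert_eq_cons, Multiset.cons_add]
  | impL4a Γ Δ φ ψ γ =>
    rw [mea_cons, mea_some, mea_cons]
    refine ⟨Γ.map w, {w (IF.imp ψ γ), w (IF.imp φ ψ)},
      w (IF.imp (IF.imp φ ψ) γ) ::ₘ (Δ.elim 0 fun χ => {w χ}), ?_, ?_, ?_, ?_⟩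
    · exact Multiset.cons_ne_zero
    · rw [add_comm]
      simp [Multiset.insert_eq_cons, Multiset.cons_add, mea]
    · rw [Multiset.add_cons]
      rfl
    · intro y hy
      refine ⟨w (IF.imp (IF.imp φ ψ) γ), Multiset.mem_cons_self _ _, ?_⟩
      rcases Multiset.mem_cons.1 hy with rfl | hy
      · simp [w]
      · rw [Multiset.mem_singleton.1 hy]; simp [w]
  | impL4b Γ Δ φ ψ γ =>
    rw [mea_cons, mea_cons]
    refine MLT_of (mea (Γ, Δ)) {w γ} (w (IF.imp (IF.imp φ ψ) γ)) ?_ _ _ ?_ rfl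
    · intro y hy
      rw [Multiset.mem_singleton.1 hy]; simp [w]
    · rw [add_comm, Multiset.singleton_add]


/-- Dyckhoff's calculus is terminating: the Dershowitz-Manna
order on weight-multisets is well-founded, every premise of every rule instance
is strictly smaller than its conclusion in this order, and consequently
backward proof search terminates (the premise-of relation is well-founded). -/
theorem dyckhoff_terminating :
    WellFounded MLT ∧
    (∀ S T : DSeq, DStep S T → MLT (mea S) (mea T)) ∧
    WellFounded DStep := by
  refine ⟨MLT_wf, fun S T h => MLT_step h, ?_⟩
  exact Subrelation.wf (fun h => MLT_step h) (InvImage.wf mea MLT_wf)
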